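/- Let f ∈ ℤ_p[[w]] be nonzero with μ(f) = 0, and let z ∈ ℂ_p with 0 < v_p(z) and v_p(z) strictly less than the valuation of every root of f in the open unit disc. Then f(z) ≠ 0 and v_p(f(z)) = λ(f) · v_p(z), where λ(f) is the Weierstrass degree of f. -/

import Mathlib

open PowerSeries Polynomial Finset IsUltrametricDist

section Aux

variable {p : ℕ} [Fact p.Prime]
variable {K : Type*} [NontriviallyNormedField K] [CompleteSpace K]
variable [Algebra ℚ_[p] K]

/-- The ring hom `ℤ_[p] → K`. -/
noncomputable def phiK (p : ℕ) [Fact p.Prime] (K : Type*) [NormedField K] [Algebra ℚ_[p] K] :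
    ℤ_[p] →+* K :=
  (algebraMap ℚ_[p] K).comp (PadicInt.Coe.ringHom)

theorem phiK_norm (hnorm : ∀ x : ℚ_[p], ‖algebraMap ℚ_[p] K x‖ = ‖x‖) (x : ℤ_[p]) :
    ‖phiK p K x‖ = ‖x‖ := by
  rw [phiK, RingHom.comp_apply, hnorm, PadicInt.norm_def]
  rfl

theorem aux_summable (hnorm : ∀ x : ℚ_[p], ‖algebraMap ℚ_[p] K x‖ = ‖x‖)
    (c : ℕ → ℤ_[p]) {w : K} (hw : ‖w‖ < 1) :
    Summable fun n => ‖phiK p K (c n) * w ^ n‖ := by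
  refine Summable.of_nonneg_of_le (fun n => norm_nonneg _) (fun n => ?_)
    (summable_geometric_of_lt_one (norm_nonneg w) hw)
  rw [norm_mul, phiK_norm hnorm, norm_pow]
  calc ‖c n‖ * ‖w‖ ^ n ≤ 1 * ‖w‖ ^ n := by
        gcongr; exact (c n).norm_le_one
    _ = ‖w‖ ^ n := one_mul _

end Aux

set_option linter.unusedSectionVars false

section Aux2

variable {p : ℕ} [Fact p.Prime]
variable {K : Type*} [NontriviallyNormedField K] [CompleteSpace K]
variable [Algebra ℚ_[p] K]
variable (hnorm : ∀ x : ℚ_[p], ‖algebraMap ℚ_[p] K x‖ = ‖x‖)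

/-- Evaluation of a `ℤ_[p]` power series at a point of `K`. -/
noncomputable def evPS (p : ℕ) [Fact p.Prime] (K : Type*) [NormedField K] [Algebra ℚ_[p] K]
    (g : PowerSeries ℤ_[p]) (w : K) : K :=
  ∑' n : ℕ, phiK p K (PowerSeries.coeff (R := ℤ_[p]) n g) * w ^ n

include hnorm in
theorem evPS_mul (g h : PowerSeries ℤ_[p]) {w : K} (hw : ‖w‖ < 1) :
    evPS p K (g * h) w = evPS p K g w * evPS p K h w := by
  rw [evPS, evPS, evPS,
    tsum_mul_tsum_eq_tsum_sum_antidiagonal_of_summable_norm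
      (aux_summable hnorm _ hw) (aux_summable hnorm _ hw)]
  congr 1
  funext n
  rw [PowerSeries.coeff_mul, map_sum, Finset.sum_mul]
  refine Finset.sum_congr rfl fun kl hkl => ?_
  rw [map_mul, ← (Finset.HasAntidiagonal.mem_antidiagonal.mp hkl), pow_add]
  ring

end Aux2

section Aux3

variable {p : ℕ} [Fact p.Prime]
variable {K : Type*} [NontriviallyNormedField K] [CompleteSpace K]
variable [Algebra ℚ_[p] K]

theorem evPS_poly (F : Polynomial ℤ_[p]) (w : K) :
    evPS p K (PowerSeries.mk fun n => F.coeff n) w = (F.map (phiK p K)).eval w := by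
  rw [evPS]
  have h0 : ∀ n ∉ Finset.range (F.natDegree + 1),
      phiK p K (PowerSeries.coeff (R := ℤ_[p]) n (PowerSeries.mk fun n => F.coeff n)) * w ^ n = 0 := by
    intro n hn
    rw [PowerSeries.coeff_mk, Polynomial.coeff_eq_zero_of_natDegree_lt
      (by simpa using Finset.mem_range.not.mp hn), map_zero, zero_mul]
  rw [tsum_eq_sum h0]
  rcases eq_or_ne F 0 with rfl | hF
  · simp
  rw [Polynomial.eval_eq_sum_range' (n := F.natDegree + 1)
      (lt_of_le_of_lt Polynomial.natDegree_map_le (Nat.lt_succ_self _))]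
  refine Finset.sum_congr rfl fun n _ => ?_
  rw [PowerSeries.coeff_mk, Polynomial.coeff_map]

end Aux3

section Aux4

variable {p : ℕ} [Fact p.Prime]
variable {K : Type*} [NontriviallyNormedField K] [CompleteSpace K] [IsUltrametricDist K]
variable [Algebra ℚ_[p] K]
variable (hnorm : ∀ x : ℚ_[p], ‖algebraMap ℚ_[p] K x‖ = ‖x‖)

include hnorm in
theorem evPS_unit_norm (u : (PowerSeries ℤ_[p])ˣ) {w : K} (hw : ‖w‖ < 1) :
    ‖evPS p K (u : PowerSeries ℤ_[p]) w‖ = 1 := by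
  have hsum : Summable fun n : ℕ =>
      phiK p K (PowerSeries.coeff (R := ℤ_[p]) n (u : PowerSeries ℤ_[p])) * w ^ n :=
    (aux_summable hnorm _ hw).of_norm
  rw [evPS, hsum.tsum_eq_zero_add]
  have h0 : ‖phiK p K (PowerSeries.coeff (R := ℤ_[p]) 0 (u : PowerSeries ℤ_[p])) * w ^ 0‖ = 1 := by
    rw [pow_zero, mul_one, phiK_norm hnorm]
    rw [← PadicInt.isUnit_iff]
    have : IsUnit (PowerSeries.constantCoeff (R := ℤ_[p]) (u : PowerSeries ℤ_[p])) :=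
      (Units.isUnit u).map (PowerSeries.constantCoeff (R := ℤ_[p]))
    simpa [PowerSeries.coeff_zero_eq_constantCoeff] using this
  have htail : ‖∑' n : ℕ,
      phiK p K (PowerSeries.coeff (R := ℤ_[p]) (n + 1) (u : PowerSeries ℤ_[p])) * w ^ (n + 1)‖ ≤ ‖w‖ := by
    refine IsUltrametricDist.norm_tsum_le_of_forall_le_of_nonneg (norm_nonneg w) fun n => ?_
    rw [norm_mul, phiK_norm hnorm, norm_pow]
    calc ‖PowerSeries.coeff (R := ℤ_[p]) (n + 1) (u : PowerSeries ℤ_[p])‖ * ‖w‖ ^ (n + 1)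
        ≤ 1 * ‖w‖ ^ (n + 1) := by gcongr; exact PadicInt.norm_le_one _
      _ = ‖w‖ ^ (n + 1) := one_mul _
      _ ≤ ‖w‖ ^ 1 := pow_le_pow_of_le_one (norm_nonneg w) hw.le (by omega)
      _ = ‖w‖ := pow_one _
  have hne : ‖(∑' n : ℕ,
      phiK p K (PowerSeries.coeff (R := ℤ_[p]) (n + 1) (u : PowerSeries ℤ_[p])) * w ^ (n + 1))‖
      ≠ ‖phiK p K (PowerSeries.coeff (R := ℤ_[p]) 0 (u : PowerSeries ℤ_[p])) * w ^ 0‖ := by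
    rw [h0]; exact ne_of_lt (lt_of_le_of_lt htail hw)
  rw [add_comm, IsUltrametricDist.norm_add_eq_max_of_norm_ne_norm hne, h0]
  exact max_eq_right (lt_of_le_of_lt htail hw).le

end Aux4

section Aux5

variable {p : ℕ} [Fact p.Prime]
variable {K : Type*} [NontriviallyNormedField K] [CompleteSpace K] [IsUltrametricDist K]
variable [Algebra ℚ_[p] K]
variable (hnorm : ∀ x : ℚ_[p], ‖algebraMap ℚ_[p] K x‖ = ‖x‖)

include hnorm in
theorem root_norm_lt_one (lam : ℕ) (F : Polynomial ℤ_[p])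
    (hF_monic : F.Monic) (hF_deg : F.natDegree = lam)
    (hF_dist : ∀ i < lam, (p : ℤ_[p]) ∣ F.coeff i)
    {r : K} (hr : (F.map (phiK p K)).eval r = 0) : ‖r‖ < 1 := by
  have hp1 : (1 : ℝ) < p := by exact_mod_cast (Fact.out : p.Prime).one_lt
  have hcoeff : ∀ i < lam, ‖phiK p K (F.coeff i)‖ ≤ (p : ℝ)⁻¹ := by
    intro i hi
    obtain ⟨d, hd⟩ := hF_dist i hi
    rw [phiK_norm hnorm, hd, norm_mul, PadicInt.norm_p]
    have h1 : ‖d‖ ≤ 1 := PadicInt.norm_le_one d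
    have h2 : (0:ℝ) ≤ (p : ℝ)⁻¹ := by positivity
    nlinarith
  by_contra hcon
  push_neg at hcon
  have hr0 : (0 : ℝ) < ‖r‖ := lt_of_lt_of_le one_pos hcon
  have hdeglt : (F.map (phiK p K)).natDegree < lam + 1 :=
    lt_of_le_of_lt Polynomial.natDegree_map_le (by omega)
  have heval := hr
  rw [Polynomial.eval_eq_sum_range' hdeglt, Finset.sum_range_succ] at heval
  have hclam : (F.map (phiK p K)).coeff lam = 1 := by
    rw [Polynomial.coeff_map, ← hF_deg, hF_monic.coeff_natDegree, map_one]
  rw [hclam, one_mul] at heval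
  have hkey : r ^ lam = -∑ i ∈ Finset.range lam, (F.map (phiK p K)).coeff i * r ^ i := by
    linear_combination heval
  have hbound : ‖r ^ lam‖ ≤ (p : ℝ)⁻¹ * ‖r‖ ^ lam := by
    rw [hkey, norm_neg]
    refine IsUltrametricDist.norm_sum_le_of_forall_le_of_nonneg
      (by positivity) fun i hi => ?_
    rw [Finset.mem_range] at hi
    rw [norm_mul, Polynomial.coeff_map, norm_pow]
    exact mul_le_mul (hcoeff i hi) (pow_le_pow_right₀ hcon hi.le) (by positivity)
      (by positivity)
  rw [norm_pow] at hbound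
  have hrp : (0:ℝ) < ‖r‖ ^ lam := by positivity
  have hinv : (p : ℝ)⁻¹ < 1 := by
    rw [inv_lt_one_iff₀]; right; exact hp1
  have : (p : ℝ)⁻¹ * ‖r‖ ^ lam < 1 * ‖r‖ ^ lam :=
    mul_lt_mul_of_pos_right hinv hrp
  rw [one_mul] at this
  exact absurd (lt_of_le_of_lt hbound this) (lt_irrefl _)

end Aux5

/-- Let `K` be a complete algebraically closed nonarchimedean normed field extending `ℚ_p`
isometrically (a model of `ℂ_p`), with valuation `v z = -log_p ‖z‖`.  Let `f ∈ ℤ_p[[w]]` be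
nonzero with `μ(f) = 0`, i.e. `f = F · u` with `F` a distinguished polynomial of degree
`λ(f) = lam` (the Weierstrass degree) and `u` a unit.  If `z` satisfies `0 < v z` and
`v z` is strictly less than the valuation of every root of `f` in the open unit disc, then
`f(z) ≠ 0` and `v (f z) = λ(f) · v z`. -/
theorem eval_ne_zero_and_valuation_eq_lambda_mul
    (p : ℕ) [Fact p.Prime]
    (K : Type*) [NontriviallyNormedField K] [CompleteSpace K] [IsAlgClosed K]
    [Algebra ℚ_[p] K]
    (hnorm : ∀ x : ℚ_[p], ‖algebraMap ℚ_[p] K x‖ = ‖x‖)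
    (hna : ∀ x y : K, ‖x + y‖ ≤ max ‖x‖ ‖y‖)
    (f : PowerSeries ℤ_[p]) (hf : f ≠ 0)
    (lam : ℕ) (F : Polynomial ℤ_[p]) (u : (PowerSeries ℤ_[p])ˣ)
    (hF_monic : F.Monic) (hF_deg : F.natDegree = lam)
    (hF_dist : ∀ i < lam, (p : ℤ_[p]) ∣ F.coeff i)
    (hfact : f = (PowerSeries.mk fun n => F.coeff n) * (u : PowerSeries ℤ_[p]))
    (z : K) (hz : 0 < -Real.logb p ‖z‖)
    (hroots : ∀ w : K, ‖w‖ < 1 →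
      (∑' n : ℕ, algebraMap ℚ_[p] K ((PowerSeries.coeff (R := ℤ_[p]) n f : ℤ_[p]) : ℚ_[p]) * w ^ n)
        = 0 → -Real.logb p ‖z‖ < -Real.logb p ‖w‖) :
    (∑' n : ℕ, algebraMap ℚ_[p] K ((PowerSeries.coeff (R := ℤ_[p]) n f : ℤ_[p]) : ℚ_[p]) * z ^ n) ≠ 0
      ∧ -Real.logb p
          ‖∑' n : ℕ, algebraMap ℚ_[p] K ((PowerSeries.coeff (R := ℤ_[p]) n f : ℤ_[p]) : ℚ_[p]) * z ^ n‖
        = (lam : ℝ) * (-Real.logb p ‖z‖) := by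
  haveI : IsUltrametricDist K := isUltrametricDist_of_isNonarchimedean_norm hna
  have hp1 : (1 : ℝ) < p := by exact_mod_cast (Fact.out : p.Prime).one_lt
  have hEv : ∀ (g : PowerSeries ℤ_[p]) (w : K),
      (∑' n : ℕ, algebraMap ℚ_[p] K ((PowerSeries.coeff (R := ℤ_[p]) n g : ℤ_[p]) : ℚ_[p]) * w ^ n)
        = evPS p K g w := fun g w => rfl
  have hz0 : 0 < ‖z‖ := by
    rcases eq_or_lt_of_le (norm_nonneg z) with h | h
    · rw [← h, Real.logb_zero, neg_zero] at hz; exact absurd hz (lt_irrefl _)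
    · exact h
  have hz1 : ‖z‖ < 1 := by
    have := Real.logb_neg_iff hp1 hz0
    rw [← this]
    linarith
  set Fm := F.map (phiK p K) with hFm
  have hFm_monic : Fm.Monic := hF_monic.map _
  have hFm_deg : Fm.natDegree = lam := by
    rw [hFm, hF_monic.natDegree_map, hF_deg]
  have hsplits : Fm.Splits := IsAlgClosed.splits Fm
  have hroot_lt : ∀ r ∈ Fm.roots, ‖z - r‖ = ‖z‖ := by
    intro r hr
    have hr0 : Fm.eval r = 0 := Polynomial.isRoot_of_mem_roots hr
    have hrlt1 : ‖r‖ < 1 := root_norm_lt_one hnorm lam F hF_monic hF_deg hF_dist hr0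
    have hfr : evPS p K f r = 0 := by
      rw [hfact, evPS_mul hnorm _ _ hrlt1, evPS_poly, ← hFm, hr0, zero_mul]
    have hlog := hroots r hrlt1 (by rw [hEv]; exact hfr)
    have hrpos : 0 < ‖r‖ := by
      rcases eq_or_lt_of_le (norm_nonneg r) with h | h
      · rw [← h, Real.logb_zero, neg_zero] at hlog; linarith
      · exact h
    have hrz : ‖r‖ < ‖z‖ := by
      rw [← Real.logb_lt_logb_iff hp1 hrpos hz0]
      linarith
    have hne : ‖z‖ ≠ ‖-r‖ := by
      rw [norm_neg]; exact ne_of_gt hrz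
    rw [sub_eq_add_neg, IsUltrametricDist.norm_add_eq_max_of_norm_ne_norm hne, norm_neg]
    exact max_eq_left hrz.le
  have hFz : ‖Fm.eval z‖ = ‖z‖ ^ lam := by
    conv_lhs => rw [hsplits.eq_prod_roots_of_monic hFm_monic]
    rw [Polynomial.eval_multiset_prod]
    have : Multiset.map (Polynomial.eval z) (Multiset.map (fun a => Polynomial.X - Polynomial.C a)
        Fm.roots) = Multiset.map (fun a => z - a) Fm.roots := by
      rw [Multiset.map_map]
      exact Multiset.map_congr rfl fun a _ => by simp
    rw [this]
    rw [show ‖(Multiset.map (fun a => z - a) Fm.roots).prod‖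
        = (Multiset.map (fun a => ‖z - a‖) Fm.roots).prod from by
      have h := map_multiset_prod (normHom : K →*₀ ℝ) (Multiset.map (fun a => z - a) Fm.roots)
      simpa [Multiset.map_map, Function.comp, normHom] using h]
    rw [Multiset.map_congr rfl fun a ha => hroot_lt a ha]
    rw [Multiset.map_const', Multiset.prod_replicate]
    congr 1
    rw [← hFm_deg]
    exact (Polynomial.splits_iff_card_roots).mp hsplits
  have hfz : ‖evPS p K f z‖ = ‖z‖ ^ lam := by
    rw [hfact, evPS_mul hnorm _ _ hz1, evPS_poly, ← hFm, norm_mul,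
      evPS_unit_norm hnorm u hz1, mul_one, hFz]
  rw [hEv]
  constructor
  · intro h
    rw [h, norm_zero] at hfz
    have : (0 : ℝ) < ‖z‖ ^ lam := by positivity
    rw [← hfz] at this
    exact absurd this (lt_irrefl _)
  · rw [hfz, Real.logb_pow]
    ring
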